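/- Let G be a simple graph and S an independent set of vertices such that every induced (chordless) odd cycle of G contains a vertex of S. Then the induced subgraph G − S is bipartite, and consequently G is properly 3-colorable. -/

import Mathlib

/-- A cycle (as a closed walk) is chordless (induced) if every edge of the graph
between vertices of the cycle is an edge of the cycle. -/
def SimpleGraph.Walk.IsChordless' {V : Type*} {G : SimpleGraph V} {v : V}
    (c : G.Walk v v) : Prop :=
  ∀ x y : V, x ∈ c.support → y ∈ c.support → G.Adj x y → s(x, y) ∈ c.edges


open SimpleGraph

namespace MyAux


variable {W : Type*} {H : SimpleGraph W}

/-- A walk of length 1 has the edge between its endpoints. -/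
lemma edge_mem_of_length_one {a b : W} {p : H.Walk a b} (h : p.length = 1) :
    s(a, b) ∈ p.edges := by
  cases p with
  | nil => simp at h
  | cons h' q =>
    have hq : q.length = 0 := by simp only [SimpleGraph.Walk.length_cons] at h; omega
    have := SimpleGraph.Walk.eq_of_length_eq_zero hq
    subst this
    simp

/-- From a closed walk with a repeated vertex in the tail of its support,
extract a strictly shorter odd closed walk (if the original is odd). -/
lemma shorter_of_dup {v : W} (c : H.Walk v v) (hodd : Odd c.length)
    (hdup : ¬ c.support.tail.Nodup) :
    ∃ (u : W) (w : H.Walk u u), Odd w.length ∧ w.length < c.length := by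
  classical
  rw [List.nodup_iff_count_le_one] at hdup
  push_neg at hdup
  obtain ⟨u, hu2⟩ := hdup
  have hu2 : 2 ≤ c.support.tail.count u := hu2
  have hut : u ∈ c.support.tail := by
    rw [← List.count_pos_iff]; omega
  have hu : u ∈ c.support := List.mem_of_mem_tail hut
  set c1 := c.rotate u hu with hc1
  have hlen1 : c1.length = c.length := by
    have h1 := congrArg Walk.length (c.take_spec hu)
    rw [Walk.length_append] at h1
    simp only [hc1, Walk.rotate, Walk.length_append]
    omega
  have hcount : 2 ≤ c1.support.tail.count u := by
    rw [(Walk.support_rotate c u hu).perm.count_eq]; exact hu2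
  have hnotnil : ¬ c1.Nil := by
    rw [Walk.not_nil_iff_lt_length, hlen1]
    have := hodd.pos; omega
  obtain ⟨z, hadj, p, hc1eq⟩ := Walk.not_nil_iff.mp hnotnil
  have hps : c1.support.tail = p.support := by rw [hc1eq, Walk.support_cons, List.tail_cons]
  rw [hps] at hcount
  have hup : u ∈ p.support := by rw [← List.count_pos_iff]; omega
  set t := p.takeUntil u hup with ht
  set d := p.dropUntil u hup with hd
  have hsum : t.length + d.length = p.length := by
    have := congrArg Walk.length (p.take_spec hup)
    rwa [Walk.length_append] at this
  have hplen : p.length + 1 = c.length := by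
    have := congrArg Walk.length hc1eq
    rw [Walk.length_cons] at this
    omega
  have hcount1 : t.support.count u = 1 := p.count_support_takeUntil_eq_one hup
  have hd1 : 1 ≤ d.length := by
    have hsupp := congrArg Walk.support (p.take_spec hup)
    rw [Walk.support_append] at hsupp
    have hcnt : p.support.count u = t.support.count u + d.support.tail.count u := by
      rw [← hsupp, List.count_append]
    have : 1 ≤ d.support.tail.count u := by omega
    have hne : d.support.tail ≠ [] := by
      intro h; rw [h] at this; simp at this
    have h0 : d.support.tail.length ≠ 0 := fun h => hne (List.eq_nil_of_length_eq_zero h)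
    have hds := Walk.length_support d
    have htl : d.support.tail.length = d.support.length - 1 := List.length_tail (l := _)
    omega
  rw [Nat.odd_iff] at hodd
  by_cases hpar : (t.length + 1) % 2 = 1
  · exact ⟨u, Walk.cons hadj t, Nat.odd_iff.mpr (by rw [Walk.length_cons]; omega),
      by rw [Walk.length_cons]; omega⟩
  · exact ⟨u, d, Nat.odd_iff.mpr (by omega), by omega⟩

/-- From a closed odd walk with a chord, extract a strictly shorter odd closed walk. -/
lemma shorter_of_chord {v x y : W} (c : H.Walk v v) (hodd : Odd c.length)
    (hx : x ∈ c.support) (hy : y ∈ c.support.tail) (hadj : H.Adj x y)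
    (hne : s(x, y) ∉ c.edges) :
    ∃ (u : W) (w : H.Walk u u), Odd w.length ∧ w.length < c.length := by
  classical
  have hxy : x ≠ y := hadj.ne
  set c1 := c.rotate x hx with hc1
  have hlen1 : c1.length = c.length := by
    have h1 := congrArg Walk.length (c.take_spec hx)
    rw [Walk.length_append] at h1
    simp only [hc1, Walk.rotate, Walk.length_append]
    omega
  have hy1 : y ∈ c1.support := by
    apply List.mem_of_mem_tail
    exact (Walk.support_rotate c x hx).perm.mem_iff.mpr hy
  have hedges : ∀ e, e ∈ c1.edges ↔ e ∈ c.edges :=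
    fun e => (Walk.rotate_edges c x hx).perm.mem_iff
  set t := c1.takeUntil y hy1 with ht
  set d := c1.dropUntil y hy1 with hd
  have hsum : t.length + d.length = c.length := by
    have h2 := congrArg Walk.length (c1.take_spec hy1)
    rw [Walk.length_append, ← ht, ← hd] at h2
    omega
  have ht0 : t.length ≠ 0 := fun h => hxy (Walk.eq_of_length_eq_zero h)
  have ht1 : t.length ≠ 1 := by
    intro h
    exact hne ((hedges _).mp (c1.edges_takeUntil_subset hy1 (edge_mem_of_length_one h)))
  have hd0 : d.length ≠ 0 := fun h => hxy (Walk.eq_of_length_eq_zero h).symm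
  have hd1 : d.length ≠ 1 := by
    intro h
    have := edge_mem_of_length_one (p := d) h
    rw [Sym2.eq_swap] at this
    exact hne ((hedges _).mp (c1.edges_dropUntil_subset hy1 this))
  rw [Nat.odd_iff] at hodd
  by_cases hpar : (t.length + 1) % 2 = 1
  · exact ⟨y, Walk.cons hadj.symm t, Nat.odd_iff.mpr (by rw [Walk.length_cons]; omega),
      by rw [Walk.length_cons]; omega⟩
  · exact ⟨x, Walk.cons hadj d, Nat.odd_iff.mpr (by rw [Walk.length_cons]; omega),
      by rw [Walk.length_cons]; omega⟩

/-- In a path of length ≥ 2 from `w` to `v`, the edge `s(v,w)` does not occur. -/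
lemma not_edge_endpoints {w v : W} {p : H.Walk w v} (hp : p.IsPath) (hl : 2 ≤ p.length) :
    s(v, w) ∉ p.edges := by
  intro he
  cases p with
  | nil => simp at hl
  | cons h' q =>
    rename_i x
    -- h' : H.Adj w x, q : H.Walk x v
    rw [SimpleGraph.Walk.edges_cons, List.mem_cons] at he
    have hwq : w ∉ q.support := by
      have := hp.support_nodup
      rw [SimpleGraph.Walk.support_cons, List.nodup_cons] at this
      exact this.1
    rcases he with he | he
    · -- s(v,w) = s(w,x)
      rw [Sym2.eq_iff] at he
      rcases he with ⟨hv, hw⟩ | ⟨hv, hw⟩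
      · -- v = w, w = x
        exact hwq (hv ▸ q.end_mem_support)
      · -- v = x ∧ w = w
        have hvx : x = v := hv.symm
        subst hvx
        -- q : Walk v v path, length ≥ 1
        have hq1 : 1 ≤ q.length := by
          have := SimpleGraph.Walk.length_cons h' q
          omega
        cases q with
        | nil => simp at hq1
        | cons h'' r =>
          have := hp.support_nodup
          rw [SimpleGraph.Walk.support_cons, SimpleGraph.Walk.support_cons,
            List.nodup_cons, List.nodup_cons] at this
          exact this.2.1 r.end_mem_support
    · exact hwq (SimpleGraph.Walk.snd_mem_support_of_mem_edges q he)

/-- Every closed odd walk yields a chordless odd cycle. -/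
lemma exists_chordless_odd_cycle :
    ∀ (n : ℕ), Odd n → ∀ (v : W) (c : H.Walk v v), c.length = n →
      ∃ (u : W) (d : H.Walk u u), d.IsCycle ∧ Odd d.length ∧ d.IsChordless' := by
  intro n
  induction n using Nat.strong_induction_on with
  | _ n ih =>
    intro hodd v c hlen
    subst hlen
    by_cases hnd : c.support.tail.Nodup
    · -- decompose c as a cons
      have hnotnil : ¬ c.Nil := by
        rw [Walk.not_nil_iff_lt_length]
        exact hodd.pos
      obtain ⟨z, hadj, p, hceq⟩ := Walk.not_nil_iff.mp hnotnil
      have hpsupp : p.support = c.support.tail := by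
        rw [hceq, Walk.support_cons, List.tail_cons]
      have hpath : p.IsPath := Walk.IsPath.mk' (hpsupp ▸ hnd)
      have hplen : p.length + 1 = c.length := by
        rw [hceq, Walk.length_cons]
      -- c.length = 1 is impossible
      rcases eq_or_ne c.length 1 with h1 | h1
      · exfalso
        have hz : z = v := Walk.eq_of_length_eq_zero (p := p) (by omega)
        subst hz
        exact hadj.ne rfl
      have h3 : 3 ≤ c.length := by
        rcases hodd with ⟨k, hk⟩
        omega
      have hnoedge : s(v, z) ∉ p.edges := not_edge_endpoints hpath (by omega)
      have hcyc : c.IsCycle := by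
        rw [hceq]
        exact (Walk.cons_isCycle_iff p hadj).mpr ⟨hpath, hnoedge⟩
      by_cases hch : c.IsChordless'
      · exact ⟨v, c, hcyc, hodd, hch⟩
      · -- there is a chord
        unfold Walk.IsChordless' at hch
        push_neg at hch
        obtain ⟨x, y, hx, hy, hadj2, hne⟩ := hch
        have hxy : x ≠ y := hadj2.ne
        have hsplit : ∃ (u : W) (w : H.Walk u u), Odd w.length ∧ w.length < c.length := by
          rcases eq_or_ne y v with rfl | hyv
          · -- swap roles: use x in tail
            have hxv : x ≠ y := hxy
            have hxt : x ∈ c.support.tail := by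
              rw [c.support_eq_cons, List.mem_cons] at hx
              tauto
            refine shorter_of_chord c hodd hy hxt hadj2.symm ?_
            rwa [Sym2.eq_swap]
          · have hyt : y ∈ c.support.tail := by
              rw [c.support_eq_cons, List.mem_cons] at hy
              tauto
            exact shorter_of_chord c hodd hx hyt hadj2 hne
        obtain ⟨u, w, hwodd, hwlt⟩ := hsplit
        exact ih w.length hwlt hwodd u w rfl
    · obtain ⟨u, w, hwodd, hwlt⟩ := shorter_of_dup c hodd hnd
      exact ih w.length hwlt hwodd u w rfl

/-- A graph with no odd closed walk is 2-colorable. -/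
lemma colorable_two_of_no_odd_closed_walk
    (hno : ∀ (v : W) (c : H.Walk v v), ¬ Odd c.length) : H.Colorable 2 := by
  classical
  have key : ∀ (r a b : W) (p : H.Walk r a) (q : H.Walk r b), H.Adj a b →
      p.length % 2 ≠ q.length % 2 := by
    intro r a b p q hab heq
    apply hno r (p.append (Walk.cons hab q.reverse))
    rw [Walk.length_append, Walk.length_cons, Walk.length_reverse, Nat.odd_iff]
    omega
  have hre : ∀ v : W, H.Reachable ((H.connectedComponentMk v).out) v := by
    intro v
    exact ConnectedComponent.eq.mp (Quot.out_eq _)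
  let color : W → Bool := fun v => decide ((hre v).some.length % 2 = 1)
  have valid : ∀ {a b : W}, H.Adj a b → color a ≠ color b := by
    intro a b hab
    have hroot : (H.connectedComponentMk a).out = (H.connectedComponentMk b).out := by
      rw [ConnectedComponent.connectedComponentMk_eq_of_adj hab]
    have hk := key _ a b (hre a).some (((hre b).some).copy hroot.symm rfl) hab
    rw [Walk.length_copy] at hk
    simp only [color, ne_eq, decide_eq_decide]
    omega
  exact ⟨(recolorOfEquiv H finTwoEquiv.symm) (Coloring.mk color valid)⟩

end MyAux

open MyAux in
/-- If `S` is an independent set of vertices meeting every induced (chordless)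
odd cycle, then the induced subgraph on the complement of `S` is bipartite, and
the graph is properly 3-colorable. -/
theorem bipartite_complement_and_three_colorable {V : Type*} [Fintype V]
    (G : SimpleGraph V) (S : Set V)
    (hindep : ∀ a ∈ S, ∀ b ∈ S, ¬ G.Adj a b)
    (hmeet : ∀ (v : V) (c : G.Walk v v), c.IsCycle → Odd c.length →
      c.IsChordless' → ∃ x ∈ S, x ∈ c.support) :
    (G.induce Sᶜ).Colorable 2 ∧ G.Colorable 3 := by
  classical
  set H := G.induce Sᶜ with hH
  -- the inclusion homomorphism
  let f : H →g G := ⟨Subtype.val, fun {a b} h => h⟩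
  have hno : ∀ (v : ↥Sᶜ) (c : H.Walk v v), ¬ Odd c.length := by
    intro v c hodd
    obtain ⟨u, d, hc, hodd', hch⟩ :=
      exists_chordless_odd_cycle c.length hodd v c rfl
    have hinj : Function.Injective f := Subtype.val_injective
    set d' : G.Walk (u : V) (u : V) := d.map f with hd'
    have hcyc : d'.IsCycle := (Walk.map_isCycle_iff_of_injective hinj).mpr hc
    have hodd'' : Odd d'.length := by rwa [hd', Walk.length_map]
    have hch' : d'.IsChordless' := by
      intro x y hx hy hadj
      rw [hd', Walk.support_map, List.mem_map] at hx hy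
      obtain ⟨x', hx', rfl⟩ := hx
      obtain ⟨y', hy', rfl⟩ := hy
      have hHadj : H.Adj x' y' := hadj
      have := hch x' y' hx' hy' hHadj
      rw [hd', Walk.edges_map]
      exact List.mem_map.mpr ⟨s(x', y'), this, by simp [f, Sym2.map_pair_eq]⟩
    obtain ⟨s, hsS, hsmem⟩ := hmeet (u : V) d' hcyc hodd'' hch'
    rw [hd', Walk.support_map, List.mem_map] at hsmem
    obtain ⟨s', _, rfl⟩ := hsmem
    exact s'.2 hsS
  have h2 : H.Colorable 2 := colorable_two_of_no_odd_closed_walk hno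
  refine ⟨h2, ?_⟩
  obtain ⟨c2⟩ := h2
  refine ⟨Coloring.mk (fun v => if h : v ∈ S then (2 : Fin 3)
    else (c2 ⟨v, h⟩).castSucc) ?_⟩
  intro a b hab
  by_cases ha : a ∈ S <;> by_cases hb : b ∈ S <;> simp only [ha, hb, dif_pos, dif_neg,
    not_false_iff]
  · exact absurd hab (hindep a ha b hb)
  · intro h
    have := congrArg Fin.val h
    simp at this
    omega
  · intro h
    have := congrArg Fin.val h
    simp at this
    omega
  · intro h
    have hadj : H.Adj ⟨a, ha⟩ ⟨b, hb⟩ := hab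
    exact c2.valid hadj (Fin.castSucc_injective 2 h)
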